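/- arXiv:1302.0115 — 3 statements merged into one kernel-verified Lean document; each statement's English description precedes it below -/
import Mathlib

section
/- For the Pólya urn sequence with base measure α on a finite set X (X₁ ~ α/α(X), and X_n | X₁,…,X_{n−1} ~ (α + Σ_{k<n} δ_{X_k})/(α(X)+n−1)), the joint law of (X₁,…,X_n) is exchangeable: it is invariant under any permutation of the coordinates. -/
open Finset

/-- The Pólya urn joint distribution `M_n^α` on `X^n`:
`M_n^α(x₁,…,x_n) = ∏_{i=1}^n (α(x_i) + #{k < i : x_k = x_i}) / (α(X) + i − 1)`. -/
noncomputable def polya {X : Type*} [Fintype X] [DecidableEq X] (α : X → ℝ) {n : ℕ}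
    (x : Fin n → X) : ℝ :=
  ∏ i : Fin n,
    (α (x i) + ((Finset.univ.filter fun k => k < i ∧ x k = x i).card : ℝ)) /
      ((∑ y, α y) + (i : ℕ))

/-- Rank lemma: multiplying `f` over the ranks of elements of `s` is the same as
multiplying over `range s.card`. -/
lemma prod_rank {n : ℕ} (s : Finset (Fin n)) (f : ℕ → ℝ) :
    ∏ i ∈ s, f ((s.filter (· < i)).card) = ∏ j ∈ Finset.range s.card, f j := by
  have hmaps : ∀ i ∈ s, (s.filter (· < i)).card ∈ Finset.range s.card := by
    intro i hi
    rw [Finset.mem_range]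
    refine Finset.card_lt_card ⟨Finset.filter_subset _ _, fun h => ?_⟩
    exact absurd ((Finset.mem_filter.mp (h hi)).2) (lt_irrefl i)
  have hinj : ∀ a₁ ∈ s, ∀ a₂ ∈ s,
      (s.filter (· < a₁)).card = (s.filter (· < a₂)).card → a₁ = a₂ := by
    have key : ∀ a₁ ∈ s, ∀ a₂ ∈ s, a₁ < a₂ →
        (s.filter (· < a₁)).card < (s.filter (· < a₂)).card := by
      intro a₁ h₁ a₂ _ hlt
      refine Finset.card_lt_card ⟨fun k hk => ?_, fun h => ?_⟩
      · rw [Finset.mem_filter] at hk ⊢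
        exact ⟨hk.1, hk.2.trans hlt⟩
      · have := (Finset.mem_filter.mp (h (Finset.mem_filter.mpr ⟨h₁, hlt⟩))).2
        exact absurd this (lt_irrefl a₁)
    intro a₁ h₁ a₂ h₂ hcard
    rcases lt_trichotomy a₁ a₂ with h | h | h
    · exact absurd hcard (Nat.ne_of_lt (key a₁ h₁ a₂ h₂ h))
    · exact h
    · exact absurd hcard.symm (Nat.ne_of_lt (key a₂ h₂ a₁ h₁ h))
  refine Finset.prod_bij (fun i _ => (s.filter (· < i)).card) hmaps
    (fun a₁ ha₁ a₂ ha₂ h => hinj a₁ ha₁ a₂ ha₂ h) ?_ (fun a ha => rfl)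
  · intro b hb
    obtain ⟨a, ha, hab⟩ := Finset.surj_on_of_inj_on_of_card_le
      (fun i (_ : i ∈ s) => (s.filter (· < i)).card) hmaps
      (fun a₁ a₂ ha₁ ha₂ h => hinj a₁ ha₁ a₂ ha₂ h)
      (le_of_eq (Finset.card_range s.card)) b hb
    exact ⟨a, ha, hab.symm⟩

lemma polya_num {X : Type*} [Fintype X] [DecidableEq X] (α : X → ℝ) {n : ℕ}
    (x : Fin n → X) :
    (∏ i : Fin n,
      (α (x i) + ((Finset.univ.filter fun k => k < i ∧ x k = x i).card : ℝ)))
    = ∏ y : X, ∏ j ∈ Finset.range ((Finset.univ.filter fun i => x i = y).card),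
        (α y + (j : ℝ)) := by
  rw [← Finset.prod_fiberwise Finset.univ x
    (fun i => α (x i) + ((Finset.univ.filter fun k => k < i ∧ x k = x i).card : ℝ))]
  refine Finset.prod_congr rfl fun y _ => ?_
  rw [← prod_rank (Finset.univ.filter fun i => x i = y) (fun j => α y + (j : ℝ))]
  refine Finset.prod_congr rfl fun i hi => ?_
  have hxi : x i = y := (Finset.mem_filter.mp hi).2
  rw [hxi, Finset.filter_filter]
  congr 1
  norm_cast
  congr 1
  ext k
  simp only [Finset.mem_filter, Finset.mem_univ, true_and]
  exact and_comm

lemma filter_card_comp {X : Type*} [DecidableEq X] {n : ℕ} (x : Fin n → X)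
    (σ : Equiv.Perm (Fin n)) (y : X) :
    (Finset.univ.filter fun i => x (σ i) = y).card
      = (Finset.univ.filter fun i => x i = y).card := by
  apply Finset.card_bij (fun i _ => σ i)
  · intro i hi
    simpa using (Finset.mem_filter.mp hi).2
  · intro a _ b _ h
    exact σ.injective h
  · intro b hb
    exact ⟨σ.symm b, by simpa using (Finset.mem_filter.mp hb).2, by simp⟩

/-- The Pólya urn joint law is exchangeable: invariant under any permutation of coordinates. -/
theorem polya_exchangeable {X : Type*} [Fintype X] [DecidableEq X]
    (α : X → ℝ) (hα : ∀ y, 0 ≤ α y) (hα0 : 0 < ∑ y, α y)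
    {n : ℕ} (x : Fin n → X) (σ : Equiv.Perm (Fin n)) :
    polya α (x ∘ σ) = polya α x := by
  unfold polya
  rw [Finset.prod_div_distrib, Finset.prod_div_distrib, polya_num, polya_num]
  congr 1
  refine Finset.prod_congr rfl fun y _ => ?_
  rw [show ((Finset.univ.filter fun i => (x ∘ σ) i = y).card)
      = ((Finset.univ.filter fun i => x i = y).card) from filter_card_comp x σ y]
end

section
/- (Marginal invariance of the Pólya urn under data augmentation.) For every n ≥ 1 and every y ∈ X^n, Σ_{x ∈ X^n} M_n^{α_x}(y) · M_n^α(x) = M_n^α(y), where α_x = α + Σ_{k=1}^n δ_{x_k}. -/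
open Finset

/-- The updated base measure `α_x(y) = α(y) + #{k ≤ n : x_k = y}`. -/
noncomputable def polyaAug {X : Type*} [Fintype X] [DecidableEq X] (α : X → ℝ) {n : ℕ}
    (x : Fin n → X) : X → ℝ :=
  fun y => α y + ((Finset.univ.filter fun k => x k = y).card : ℝ)

section Aux

set_option linter.unusedSectionVars false

variable {X : Type*} [Fintype X] [DecidableEq X]

lemma polya_zero (α : X → ℝ) (x : Fin 0 → X) : polya α x = 1 := by
  simp [polya]

lemma polyaAug_zero (α : X → ℝ) (x : Fin 0 → X) : polyaAug α x = α := by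
  funext y; simp [polyaAug]

lemma sum_addOne (α : X → ℝ) (c : X) :
    (∑ y, (α y + if c = y then (1:ℝ) else 0)) = (∑ y, α y) + 1 := by
  rw [Finset.sum_add_distrib]
  simp

lemma polyaAug_cons (α : X → ℝ) {n : ℕ} (c : X) (x : Fin n → X) :
    polyaAug α (Fin.cons c x) = polyaAug (fun y => α y + if c = y then 1 else 0) x := by
  funext y
  simp only [polyaAug]
  have h : ((Finset.univ.filter fun k : Fin (n+1) =>
        (Fin.cons c x : Fin (n+1) → X) k = y).card : ℝ)
      = (if c = y then (1:ℝ) else 0)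
        + ((Finset.univ.filter fun k : Fin n => x k = y).card : ℝ) := by
    rw [Finset.card_filter, Finset.card_filter]
    push_cast
    rw [Fin.sum_univ_succ]
    simp
  rw [h]; ring

lemma polya_cons (α : X → ℝ) {n : ℕ} (c : X) (x : Fin n → X) :
    polya α (Fin.cons c x)
      = (α c / ∑ y, α y) * polya (fun y => α y + if c = y then 1 else 0) x := by
  have hcard : ∀ i : Fin n, ((Finset.univ.filter fun k : Fin (n+1) =>
        k < i.succ ∧ (Fin.cons c x : Fin (n+1) → X) k = x i).card : ℝ)
      = (if c = x i then (1:ℝ) else 0)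
        + ((Finset.univ.filter fun k : Fin n => k < i ∧ x k = x i).card : ℝ) := by
    intro i
    rw [Finset.card_filter, Finset.card_filter]
    push_cast
    rw [Fin.sum_univ_succ]
    simp [Fin.succ_lt_succ_iff, Fin.succ_pos]
  rw [polya, Fin.prod_univ_succ, polya]
  congr 1
  · have h0 : (Finset.univ.filter fun k : Fin (n+1) =>
        k < (0 : Fin (n+1)) ∧ (Fin.cons c x : Fin (n+1) → X) k
          = (Fin.cons c x : Fin (n+1) → X) 0) = ∅ := by
      apply Finset.filter_false_of_mem
      intro k _
      simp
    rw [h0]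
    simp
  · apply Finset.prod_congr rfl
    intro i _
    simp only [Fin.cons_succ]
    rw [hcard i, sum_addOne]
    simp only [Fin.val_succ]
    push_cast
    ring

lemma polyaAug_nonneg (α : X → ℝ) (hα : ∀ y, 0 ≤ α y) (c : X) :
    ∀ y, 0 ≤ α y + if c = y then (1:ℝ) else 0 := by
  intro y
  have := hα y
  split <;> linarith

lemma polyaAug_pos (α : X → ℝ) (hα0 : 0 < ∑ y, α y) (c : X) :
    0 < ∑ y, (α y + if c = y then (1:ℝ) else 0) := by
  rw [sum_addOne]; linarith

lemma polya_step {m : ℕ} : ∀ (β : X → ℝ), (∀ y, 0 ≤ β y) → (0 < ∑ y, β y) →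
    ∀ (y : Fin m → X),
    ∑ c, (β c / ∑ z, β z) * polya (fun z => β z + if c = z then 1 else 0) y
      = polya β y := by
  induction m with
  | zero =>
    intro β hβ hβ0 y
    simp only [polya_zero, mul_one]
    rw [← Finset.sum_div, div_self (ne_of_gt hβ0)]
  | succ m ih =>
    intro β hβ hβ0 y
    obtain ⟨y0, y', rfl⟩ : ∃ y0 y', y = Fin.cons y0 y' :=
      ⟨y 0, Fin.tail y, (Fin.cons_self_tail y).symm⟩
    have key : ∀ c : X,
        (β c / ∑ z, β z) * polya (fun z => β z + if c = z then 1 else 0) (Fin.cons y0 y')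
        = (β y0 / ∑ z, β z) *
            (((β c + if y0 = c then (1:ℝ) else 0) / ∑ z, (β z + if y0 = z then (1:ℝ) else 0)) *
              polya (fun z => (β z + if y0 = z then 1 else 0) + if c = z then 1 else 0) y') := by
      intro c
      simp only [polya_cons]
      have harg : (fun z => (β z + if c = z then (1:ℝ) else 0) + if y0 = z then 1 else 0)
          = fun z => (β z + if y0 = z then 1 else 0) + if c = z then 1 else 0 := by
        funext z; ring
      rw [harg, sum_addOne, sum_addOne]
      have hnum : β c * (β y0 + if c = y0 then (1:ℝ) else 0)
          = β y0 * (β c + if y0 = c then (1:ℝ) else 0) := by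
        by_cases h : c = y0
        · rw [if_pos h, if_pos h.symm, h]
        · rw [if_neg h, if_neg fun e => h e.symm]; ring
      linear_combination
        (polya (fun z => (β z + if y0 = z then (1:ℝ) else 0) + if c = z then 1 else 0) y'
          * (∑ z, β z)⁻¹ * ((∑ z, β z) + 1)⁻¹) * hnum
    calc ∑ c, (β c / ∑ z, β z) * polya (fun z => β z + if c = z then 1 else 0) (Fin.cons y0 y')
        = ∑ c, (β y0 / ∑ z, β z) *
            (((β c + if y0 = c then (1:ℝ) else 0) / ∑ z, (β z + if y0 = z then (1:ℝ) else 0)) *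
              polya (fun z => (β z + if y0 = z then 1 else 0) + if c = z then 1 else 0) y') :=
          Finset.sum_congr rfl fun c _ => key c
      _ = (β y0 / ∑ z, β z) * ∑ c,
            ((β c + if y0 = c then (1:ℝ) else 0) / ∑ z, (β z + if y0 = z then (1:ℝ) else 0)) *
              polya (fun z => (β z + if y0 = z then 1 else 0) + if c = z then 1 else 0) y' :=
          (Finset.mul_sum _ _ _).symm
      _ = (β y0 / ∑ z, β z) * polya (fun z => β z + if y0 = z then 1 else 0) y' :=
          congrArg _ (ih (fun z => β z + if y0 = z then 1 else 0)
            (polyaAug_nonneg β hβ y0) (polyaAug_pos β hβ0 y0) y')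
      _ = polya β (Fin.cons y0 y') := (polya_cons β y0 y').symm

lemma polya_key : ∀ (n : ℕ) (β : X → ℝ), (∀ y, 0 ≤ β y) → (0 < ∑ y, β y) →
    ∀ {m : ℕ} (y : Fin m → X),
    ∑ x : Fin n → X, polya (polyaAug β x) y * polya β x = polya β y := by
  intro n
  induction n with
  | zero =>
    intro β hβ hβ0 m y
    simp [polyaAug_zero, polya_zero]
  | succ n ih =>
    intro β hβ hβ0 m y
    have hinner : ∀ c : X,
        ∑ x' : Fin n → X, polya (polyaAug β (Fin.cons c x')) y * polya β (Fin.cons c x')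
        = (β c / ∑ z, β z) * polya (fun z => β z + if c = z then 1 else 0) y := by
      intro c
      have h1 : ∀ x' : Fin n → X,
          polya (polyaAug β (Fin.cons c x')) y * polya β (Fin.cons c x')
          = (β c / ∑ z, β z) *
              (polya (polyaAug (fun z => β z + if c = z then 1 else 0) x') y *
                polya (fun z => β z + if c = z then 1 else 0) x') := by
        intro x'
        rw [polyaAug_cons, polya_cons]
        ring
      rw [Finset.sum_congr rfl fun x' _ => h1 x', ← Finset.mul_sum,
        ih (fun z => β z + if c = z then 1 else 0) (polyaAug_nonneg β hβ c)
          (polyaAug_pos β hβ0 c) y]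
    calc ∑ x : Fin (n+1) → X, polya (polyaAug β x) y * polya β x
        = ∑ p : X × (Fin n → X),
            polya (polyaAug β (Fin.cons p.1 p.2)) y * polya β (Fin.cons p.1 p.2) :=
          (Fintype.sum_equiv (Fin.consEquiv fun _ => X) _ _ fun p => rfl).symm
      _ = ∑ c : X, ∑ x' : Fin n → X,
            polya (polyaAug β (Fin.cons c x')) y * polya β (Fin.cons c x') := by
          rw [Fintype.sum_prod_type]
      _ = ∑ c : X, (β c / ∑ z, β z) * polya (fun z => β z + if c = z then 1 else 0) y :=
          Finset.sum_congr rfl fun c _ => hinner c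
      _ = polya β y := polya_step β hβ hβ0 y

end Aux

/-- Marginal invariance of the Pólya urn under data augmentation:
`Σ_x M_n^{α_x}(y) · M_n^α(x) = M_n^α(y)`. -/
theorem polya_marginal_invariance {X : Type*} [Fintype X] [DecidableEq X] [Nonempty X]
    (α : X → ℝ) (hα : ∀ y, 0 ≤ α y) (hα0 : 0 < ∑ y, α y)
    {n : ℕ} (hn : 1 ≤ n) (y : Fin n → X) :
    ∑ x : Fin n → X, polya (polyaAug α x) y * polya α x = polya α y := by
  exact polya_key n α hα hα0 y
end

section
/- Under the double hierarchy where (X₁,…,X_n) ~ M_n^α and, given X = x, (Y₁,…,Y_n) ~ M_n^{α_x}, the joint distribution of (X, Y) on X^ن × X^n is symmetric: P(X = x, Y = y) = P(X = y, Y = x) for all x, y ∈ X^n. -/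
open Finset

lemma prod_count_aux {X : Type*} [Fintype X] [DecidableEq X] (β : X → ℝ) :
    ∀ {n : ℕ} (z : Fin n → X),
      (∏ i : Fin n, (β (z i) + ((Finset.univ.filter fun k => k < i ∧ z k = z i).card : ℝ)))
        = ∏ v : X, ∏ j ∈ Finset.range ((Finset.univ.filter fun k => z k = v).card), (β v + j)
  | 0, z => by simp
  | n+1, z => by
    have IH := prod_count_aux β (fun i : Fin n => z i.castSucc)
    have h1 : ∀ i : Fin n,
        ((Finset.univ.filter fun k : Fin (n+1) => k < i.castSucc ∧ z k = z i.castSucc).card)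
          = ((Finset.univ.filter fun k : Fin n => k < i ∧ z k.castSucc = z i.castSucc).card) := by
      intro i
      rw [Finset.card_filter, Finset.card_filter, Fin.sum_univ_castSucc]
      simp [Fin.castSucc_lt_castSucc_iff]
      exact fun h => absurd h (Fin.castSucc_lt_last i).asymm
    have h2 : ((Finset.univ.filter fun k : Fin (n+1) => k < Fin.last n ∧ z k = z (Fin.last n)).card)
        = ((Finset.univ.filter fun k : Fin n => z k.castSucc = z (Fin.last n)).card) := by
      rw [Finset.card_filter, Finset.card_filter, Fin.sum_univ_castSucc]
      simp [Fin.castSucc_lt_last]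
    have h3 : ∀ v : X, ((Finset.univ.filter fun k : Fin (n+1) => z k = v).card)
        = ((Finset.univ.filter fun k : Fin n => z k.castSucc = v).card)
          + if z (Fin.last n) = v then 1 else 0 := by
      intro v
      rw [Finset.card_filter, Finset.card_filter, Fin.sum_univ_castSucc]
    rw [Fin.prod_univ_castSucc]
    simp only [h1, h2]
    rw [IH]
    have : ∀ v : X,
        (∏ j ∈ Finset.range ((Finset.univ.filter fun k : Fin (n+1) => z k = v).card), (β v + j))
        = (∏ j ∈ Finset.range ((Finset.univ.filter fun k : Fin n => z k.castSucc = v).card), (β v + j))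
          * (if z (Fin.last n) = v then β v + ((Finset.univ.filter fun k : Fin n => z k.castSucc = v).card : ℝ) else 1) := by
      intro v
      rw [h3 v]
      by_cases h : z (Fin.last n) = v
      · simp [h, Finset.prod_range_succ]
      · simp [h]
    rw [Finset.prod_congr rfl fun v _ => this v, Finset.prod_mul_distrib,
      Finset.prod_ite_eq]
    simp

lemma polya_eq {X : Type*} [Fintype X] [DecidableEq X] (α : X → ℝ) {n : ℕ} (x : Fin n → X) :
    polya α x
      = (∏ v : X, ∏ j ∈ Finset.range ((Finset.univ.filter fun k => x k = v).card), (α v + j))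
        / ∏ j ∈ Finset.range n, ((∑ y, α y) + j) := by
  unfold polya
  rw [Finset.prod_div_distrib, prod_count_aux]
  congr 1
  exact Fin.prod_univ_eq_prod_range (fun j => (∑ y, α y) + j) n

/-- Symmetry of the double hierarchy: `M_n^α(x) M_n^{α_x}(y) = M_n^α(y) M_n^{α_y}(x)`. -/
theorem polya_hierarchy_symmetric {X : Type*} [Fintype X] [DecidableEq X]
    (α : X → ℝ) (hα : ∀ y, 0 ≤ α y) (hα0 : 0 < ∑ y, α y)
    {n : ℕ} (x y : Fin n → X) :
    polya α x * polya (polyaAug α x) y = polya α y * polya (polyaAug α y) x := by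
  have key : ∀ (a b : Fin n → X),
      polya α a * polya (polyaAug α a) b
        = (∏ v : X, ∏ j ∈ Finset.range
            ((Finset.univ.filter fun k => a k = v).card
              + (Finset.univ.filter fun k => b k = v).card), (α v + j))
          / ((∏ j ∈ Finset.range n, ((∑ w, α w) + j))
             * (∏ j ∈ Finset.range n, ((∑ w, α w) + n + j))) := by
    intro a b
    have hn : (∑ v : X, ((Finset.univ.filter fun k => a k = v).card)) = n := by
      rw [← Finset.card_eq_sum_card_fiberwise (fun k _ => Finset.mem_univ (a k)),
        Finset.card_univ, Fintype.card_fin]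
    have hsum : (∑ w, polyaAug α a w) = (∑ w, α w) + n := by
      unfold polyaAug
      rw [Finset.sum_add_distrib, ← Nat.cast_sum, hn]
    rw [polya_eq α a, polya_eq (polyaAug α a) b, hsum, div_mul_div_comm,
      ← Finset.prod_mul_distrib]
    congr 1
    refine Finset.prod_congr rfl fun v _ => ?_
    rw [Finset.prod_range_add]
    congr 1
    refine Finset.prod_congr rfl fun j _ => ?_
    unfold polyaAug
    push_cast
    ring
  rw [key x y, key y x]
  congr 1
  exact Finset.prod_congr rfl fun v _ => by rw [Nat.add_comm]
end
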